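/- With u_t^{(k)} = exp(z_k B_t − (Re z_k)^2 t) for k = 1,2,3 and z_1,z_2,z_3 ∈ ℂ, the product ⟨u_t^{(1)},u_t^{(2)}⟩⟨u_t^{(2)},u_t^{(3)}⟩⟨u_t^{(3)},u_t^{(1)}⟩ divided by its absolute value equals exp(i t S(z_1,z_2,z_3)), where S(z_1,z_2,z_3) = Im((z_2−z_1)·conj(z_3−z_1)) is twice the signed area of the triangle with vertices z_1,z_2,z_3. -/

import Mathlib

open MeasureTheory

/-- the product of the three pairwise inner products of the normalized
units `u_t^{(k)} = exp(z_k B_t − (Re z_k)² t)`, divided by its absolute value, equals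
`exp(i t S(z₁,z₂,z₃))` with `S(z₁,z₂,z₃) = Im((z₂−z₁) conj(z₃−z₁))`. -/
theorem stmt_2 {Ω : Type*} [MeasurableSpace Ω] (μ : Measure Ω) [IsProbabilityMeasure μ]
    (B : ℝ → Ω → ℝ)
    (hB : ∀ t : ℝ, 0 < t → ∀ w : ℂ,
      ∫ ω, Complex.exp (w * B t ω) ∂μ = Complex.exp (w ^ 2 * t / 2))
    (z₁ z₂ z₃ : ℂ) (t : ℝ) (ht : 0 < t)
    (ip : ℂ → ℂ → ℂ)
    (hip : ∀ zj zk : ℂ, ip zj zk =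
      ∫ ω, Complex.exp (zj * B t ω - (zj.re : ℂ) ^ 2 * t) *
        (starRingEnd ℂ) (Complex.exp (zk * B t ω - (zk.re : ℂ) ^ 2 * t)) ∂μ)
    (h12 : ip z₁ z₂ ≠ 0) (h23 : ip z₂ z₃ ≠ 0) (h31 : ip z₃ z₁ ≠ 0) :
    (ip z₁ z₂ * ip z₂ z₃ * ip z₃ z₁) /
        ((‖ip z₁ z₂ * ip z₂ z₃ * ip z₃ z₁‖ : ℝ) : ℂ)
      = Complex.exp (Complex.I * t * (((z₂ - z₁) * (starRingEnd ℂ) (z₃ - z₁)).im : ℝ)) := by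
  have key : ∀ zj zk : ℂ, ip zj zk =
      Complex.exp (((zj + (starRingEnd ℂ) zk) ^ 2 / 2 - (zj.re : ℂ) ^ 2 - (zk.re : ℂ) ^ 2) * t) := by
    intro zj zk
    rw [hip]
    have h1 : ∀ ω : Ω,
        Complex.exp (zj * B t ω - (zj.re : ℂ) ^ 2 * t) *
          (starRingEnd ℂ) (Complex.exp (zk * B t ω - (zk.re : ℂ) ^ 2 * t))
        = Complex.exp ((zj + (starRingEnd ℂ) zk) * B t ω) *
            Complex.exp (-(((zj.re : ℂ) ^ 2 + (zk.re : ℂ) ^ 2) * t)) := by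
      intro ω
      rw [← Complex.exp_conj, ← Complex.exp_add, ← Complex.exp_add]
      congr 1
      simp only [map_sub, map_mul, map_pow, Complex.conj_ofReal]
      ring
    simp_rw [h1]
    rw [integral_mul_const, hB t ht, ← Complex.exp_add]
    congr 1
    ring
  rw [key z₁ z₂, key z₂ z₃, key z₃ z₁, ← Complex.exp_add, ← Complex.exp_add]
  set W : ℂ := ((z₁ + (starRingEnd ℂ) z₂) ^ 2 / 2 - (z₁.re : ℂ) ^ 2 - (z₂.re : ℂ) ^ 2) * t +
      ((z₂ + (starRingEnd ℂ) z₃) ^ 2 / 2 - (z₂.re : ℂ) ^ 2 - (z₃.re : ℂ) ^ 2) * t +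
      ((z₃ + (starRingEnd ℂ) z₁) ^ 2 / 2 - (z₃.re : ℂ) ^ 2 - (z₁.re : ℂ) ^ 2) * t with hW
  rw [Complex.norm_exp, Complex.ofReal_exp, ← Complex.exp_sub]
  congr 1
  have him : W.im = t * ((z₂ - z₁) * (starRingEnd ℂ) (z₃ - z₁)).im := by
    simp only [hW, Complex.add_im, Complex.sub_im, Complex.sub_re, Complex.mul_im,
      Complex.mul_re, Complex.ofReal_re, Complex.ofReal_im, Complex.conj_re, Complex.conj_im,
      Complex.div_im, Complex.div_re, Complex.add_re, Complex.normSq_apply, pow_two, Complex.re_ofNat, Complex.im_ofNat]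
    ring
  have : W - (W.re : ℂ) = Complex.I * W.im := by
    simp [Complex.ext_iff]
  rw [this, him]
  push_cast
  ring
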